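/- Let N ≥ 3, R > 0, and let v be a function that is C² on the open upper half ball B_R⁺ ⊂ ℝ^N and C¹ up to the boundary away from the origin, satisfying: (i) −Δv ≥ 0 in B_R⁺; (ii) ∂v/∂y_N < 0 on (∂B_R⁺ ∩ ∂ℝ₊^N) \ {0}; (iii) v > 0 on closure(B_R⁺) \ {0}. Then v(y) ≥ min_{∂B_R ∩ closure(ℝ₊^N)} v for all y ∈ closure(B_R⁺) \ {0}. -/

import Mathlib

open Real Filter
open scoped BigOperators RealInnerProductSpace

noncomputable section

/-- `N`-dimensional Euclidean space. -/
abbrev E (N : ℕ) := EuclideanSpace ℝ (Fin N)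

/-- The last coordinate index of `Fin N`. -/
def lastIdx (N : ℕ) (h : 0 < N) : Fin N := ⟨N - 1, Nat.sub_lt h Nat.one_pos⟩

/-- Partial derivative of `u` in the `i`-th coordinate direction. -/
def pd {N : ℕ} (u : E N → ℝ) (i : Fin N) (y : E N) : ℝ :=
  fderiv ℝ u y (EuclideanSpace.single i 1)

/-- The Laplacian of `u`. -/
def lap {N : ℕ} (u : E N → ℝ) (y : E N) : ℝ := ∑ i, pd (pd u i) i y

variable {N : ℕ}

def qf (y : E N) : ℝ := ∑ i, (y i)^2
def Dq (y : E N) : E N →L[ℝ] ℝ := ∑ i, (2 * y i) • EuclideanSpace.proj (𝕜 := ℝ) i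

lemma qf_nonneg (y : E N) : 0 ≤ qf y := Finset.sum_nonneg fun i _ => sq_nonneg _

lemma qf_eq_norm (y : E N) : qf y = ‖y‖^2 := by
  rw [EuclideanSpace.norm_eq, Real.sq_sqrt]
  · simp [qf, Real.norm_eq_abs, sq_abs]
  · exact Finset.sum_nonneg fun i _ => by positivity

lemma qf_pos {y : E N} (hy : y ≠ 0) : 0 < qf y := by
  rw [qf_eq_norm]
  have : ‖y‖ ≠ 0 := norm_ne_zero_iff.mpr hy
  positivity

lemma hasFDerivAt_qf (y : E N) : HasFDerivAt qf (Dq y) y := by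
  have : ∀ i : Fin N, HasFDerivAt (fun z : E N => (z i)^2)
      ((2 * y i) • EuclideanSpace.proj (𝕜 := ℝ) i) y := by
    intro i
    have h1 : HasFDerivAt (fun z : E N => z i) (EuclideanSpace.proj (𝕜 := ℝ) i) y :=
      (EuclideanSpace.proj (𝕜 := ℝ) i).hasFDerivAt
    have h2 : HasDerivAt (fun t : ℝ => t^2) (2 * y i) (y i) := by
      simpa using hasDerivAt_pow 2 (y i)
    exact h2.comp_hasFDerivAt y h1
  exact HasFDerivAt.fun_sum (u := Finset.univ) (fun i _ => this i)

lemma Dq_single (y : E N) (j : Fin N) : Dq y (EuclideanSpace.single j 1) = 2 * y j := by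
  simp only [Dq, ContinuousLinearMap.sum_apply, ContinuousLinearMap.smul_apply,
    PiLp.proj_apply, EuclideanSpace.single_apply]
  rw [Finset.sum_eq_single j] <;> simp +contextual [eq_comm]

/-- The barrier `δ(‖y‖^{2p} - R^{2p}) + σ(R² - ‖y‖²)` written via `qf`. -/
def bar (p δ σ R : ℝ) (y : E N) : ℝ := δ * (qf y ^ p - (R^2) ^ p) + σ * (R^2 - qf y)

variable {p δ σ R : ℝ}

lemma hasFDerivAt_rpow_qf {y : E N} (hy : y ≠ 0) (r : ℝ) :
    HasFDerivAt (fun z : E N => qf z ^ r) ((r * qf y ^ (r-1)) • Dq y) y :=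
  (Real.hasDerivAt_rpow_const (Or.inl (qf_pos hy).ne')).comp_hasFDerivAt y (hasFDerivAt_qf y)

lemma hasFDerivAt_bar {y : E N} (hy : y ≠ 0) :
    HasFDerivAt (bar p δ σ R) ((δ * (p * qf y ^ (p-1)) - σ) • Dq y) y := by
  have g1 := ((hasFDerivAt_rpow_qf hy p).sub_const ((R^2) ^ p)).const_mul δ
  have g2 := ((hasFDerivAt_qf y).const_sub (R^2)).const_mul σ
  have g3 : HasFDerivAt (bar p δ σ R)
      (δ • (p * qf y ^ (p - 1)) • Dq y + -(σ • Dq y)) y := by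
    have g4 := g1.add g2
    simp only [smul_neg] at g4
    exact g4
  have e : δ • (p * qf y ^ (p - 1)) • Dq y + -(σ • Dq y)
      = (δ * (p * qf y ^ (p-1)) - σ) • Dq y := by module
  exact e ▸ g3

lemma pd_bar {y : E N} (hy : y ≠ 0) (i : Fin N) :
    pd (bar p δ σ R) i y = (δ * (p * qf y ^ (p-1)) - σ) * (2 * y i) := by
  rw [pd, (hasFDerivAt_bar hy).fderiv]
  simp [Dq_single]

lemma contDiff_qf : ContDiff ℝ 2 (qf : E N → ℝ) := by
  apply ContDiff.sum
  intro i _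
  exact (EuclideanSpace.proj (𝕜 := ℝ) i).contDiff.pow 2

lemma contDiffAt_bar {y : E N} (hy : y ≠ 0) : ContDiffAt ℝ 2 (bar p δ σ R) y := by
  have h1 : ContDiffAt ℝ 2 (fun z : E N => qf z ^ p) y :=
    (Real.contDiffAt_rpow_const_of_ne (qf_pos hy).ne').comp y contDiff_qf.contDiffAt
  exact (contDiffAt_const.mul (h1.sub contDiffAt_const)).add
    (contDiffAt_const.mul (contDiffAt_const.sub contDiff_qf.contDiffAt))

lemma pd_bar_eventually {x : E N} (hx : x ≠ 0) (i : Fin N) :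
    pd (bar p δ σ R) i =ᶠ[nhds x] fun y => (δ * (p * qf y ^ (p-1)) - σ) * (2 * y i) := by
  filter_upwards [isOpen_compl_singleton.mem_nhds hx] with y hy
  exact pd_bar hy i

lemma pd_pd_bar {x : E N} (hx : x ≠ 0) (i : Fin N) :
    pd (pd (bar p δ σ R) i) i x
      = (δ * (p * qf x ^ (p-1)) - σ) * 2
        + (2 * x i) * (δ * (p * (p-1) * qf x ^ (p-2)) * (2 * x i)) := by
  have hc : HasFDerivAt (fun y : E N => δ * (p * qf y ^ (p-1)) - σ)
      ((δ * (p * ((p-1) * qf x ^ (p-1-1)))) • Dq x) x := by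
    have := ((hasFDerivAt_rpow_qf hx (p-1)).const_mul p).const_mul δ
    have h2 := this.sub_const σ
    have : (δ : ℝ) • (p • (((p-1) * qf x ^ (p-1-1)) • Dq x))
        = (δ * (p * ((p-1) * qf x ^ (p-1-1)))) • Dq x := by module
    simpa [this] using h2
  have hd : HasFDerivAt (fun y : E N => 2 * y i)
      ((2:ℝ) • EuclideanSpace.proj (𝕜 := ℝ) i) x :=
    (EuclideanSpace.proj (𝕜 := ℝ) i).hasFDerivAt.const_mul 2
  have hm := hc.mul hd
  rw [pd, (pd_bar_eventually hx i).fderiv_eq,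
    (show HasFDerivAt (fun y : E N => (δ * (p * qf y ^ (p-1)) - σ) * (2 * y i)) _ x from hm).fderiv]
  have hpp : p - 1 - 1 = p - 2 := by ring
  simp only [ContinuousLinearMap.add_apply, ContinuousLinearMap.smul_apply, Dq_single,
    PiLp.proj_apply, EuclideanSpace.single_apply, hpp, smul_eq_mul, if_pos rfl, if_true]
  ring

lemma rpow_shift {x : E N} (hx : x ≠ 0) : qf x ^ (p-2) * qf x = qf x ^ (p-1) := by
  have h := qf_pos hx
  calc qf x ^ (p-2) * qf x = qf x ^ (p-2) * qf x ^ (1:ℝ) := by rw [Real.rpow_one]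
    _ = qf x ^ (p-2+1) := (Real.rpow_add h _ _).symm
    _ = qf x ^ (p-1) := by rw [show p-2+1 = p-1 by ring]

lemma lap_bar {x : E N} (hx : x ≠ 0) :
    lap (bar p δ σ R) x = 2*p*δ*((N:ℝ) + 2*p - 2) * qf x ^ (p-1) - 2*(N:ℝ)*σ := by
  unfold lap
  have hsum : ∀ i ∈ Finset.univ, pd (pd (bar p δ σ R) i) i x
      = (δ * (p * qf x ^ (p-1)) - σ) * 2
        + (4 * (δ * (p * (p-1) * qf x ^ (p-2)))) * (x i)^2 := fun i _ => by
    rw [pd_pd_bar hx i]; ring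
  rw [Finset.sum_congr rfl hsum, Finset.sum_add_distrib, Finset.sum_const, ← Finset.mul_sum]
  have hq : ∑ i, (x i)^2 = qf x := rfl
  rw [hq, Finset.card_univ, Fintype.card_fin, nsmul_eq_mul]
  linear_combination (4*δ*p*(p-1)) * rpow_shift (p := p) hx

lemma hasFDerivAt_pdbar {x : E N} (hx : x ≠ 0) (i : Fin N) :
    HasFDerivAt (fun y : E N => (δ * (p * qf y ^ (p-1)) - σ) * (2 * y i))
      ((δ * (p * qf x ^ (p-1)) - σ) • ((2:ℝ) • EuclideanSpace.proj (𝕜 := ℝ) i)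
        + (2 * x i) • ((δ * (p * ((p-1) * qf x ^ (p-1-1)))) • Dq x)) x := by
  have hc : HasFDerivAt (fun y : E N => δ * (p * qf y ^ (p-1)) - σ)
      ((δ * (p * ((p-1) * qf x ^ (p-1-1)))) • Dq x) x := by
    have := ((hasFDerivAt_rpow_qf hx (p-1)).const_mul p).const_mul δ
    have h2 := this.sub_const σ
    have e : (δ : ℝ) • (p • (((p-1) * qf x ^ (p-1-1)) • Dq x))
        = (δ * (p * ((p-1) * qf x ^ (p-1-1)))) • Dq x := by module
    exact e ▸ h2
  have hd : HasFDerivAt (fun y : E N => 2 * y i)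
      ((2:ℝ) • EuclideanSpace.proj (𝕜 := ℝ) i) x :=
    (EuclideanSpace.proj (𝕜 := ℝ) i).hasFDerivAt.const_mul 2
  exact hc.mul hd

lemma differentiableAt_pd_bar {x : E N} (hx : x ≠ 0) (i : Fin N) :
    DifferentiableAt ℝ (pd (bar p δ σ R) i) x :=
  (hasFDerivAt_pdbar hx i).differentiableAt.congr_of_eventuallyEq (pd_bar_eventually hx i)

lemma pd_add {u w : E N → ℝ} {x : E N} (hu : DifferentiableAt ℝ u x)
    (hw : DifferentiableAt ℝ w x) (i : Fin N) :
    pd (fun y => u y + w y) i x = pd u i x + pd w i x := by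
  simp [pd, fderiv_fun_add hu hw]

lemma differentiableAt_pd {u : E N → ℝ} {x : E N} (hu : ContDiffAt ℝ 2 u x) (i : Fin N) :
    DifferentiableAt ℝ (pd u i) x := by
  have h1 : ContDiffAt ℝ 1 (fderiv ℝ u) x := hu.fderiv_right (by norm_num)
  exact (h1.differentiableAt one_ne_zero).clm_apply (differentiableAt_const _)

lemma lap_add_bar {u : E N → ℝ} {x : E N} (hx : x ≠ 0) (hu : ContDiffAt ℝ 2 u x) :
    lap (fun y => u y + bar p δ σ R y) x = lap u x + lap (bar p δ σ R) x := by
  unfold lap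
  rw [← Finset.sum_add_distrib]
  refine Finset.sum_congr rfl fun i _ => ?_
  have hev : pd (fun y => u y + bar p δ σ R y) i
      =ᶠ[nhds x] fun y => pd u i y + pd (bar p δ σ R) i y := by
    filter_upwards [hu.eventually (by simp), isOpen_compl_singleton.mem_nhds hx] with y h1 h2
    exact pd_add (h1.differentiableAt (by norm_num)) ((contDiffAt_bar h2).differentiableAt
      (by norm_num)) i
  rw [pd, hev.fderiv_eq, fderiv_fun_add (differentiableAt_pd hu i) (differentiableAt_pd_bar hx i)]
  rfl

lemma eventually_lt_of_pd_neg {w : E N → ℝ} {x : E N} (hw : DifferentiableAt ℝ w x)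
    (i : Fin N) (hneg : pd w i x < 0) :
    ∀ᶠ t in nhdsWithin (0:ℝ) (Set.Ioi 0),
      w (x + t • EuclideanSpace.single i 1) < w x := by
  set e : E N := EuclideanSpace.single i 1 with he
  have hline : HasDerivAt (fun t : ℝ => x + t • e) e 0 := by
    simpa using ((hasDerivAt_id (0:ℝ)).smul_const e).const_add x
  have hψ : HasDerivAt (fun t : ℝ => w (x + t • e)) (pd w i x) 0 := by
    have hw' : HasFDerivAt w (fderiv ℝ w x) (x + (0:ℝ) • e) := by
      rw [zero_smul, add_zero]; exact hw.hasFDerivAt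
    have := hw'.comp_hasDerivAt 0 hline
    exact this
  have hslope := hasDerivAt_iff_tendsto_slope.mp hψ
  have hmono : nhdsWithin (0:ℝ) (Set.Ioi 0) ≤ nhdsWithin (0:ℝ) {(0:ℝ)}ᶜ :=
    nhdsWithin_mono 0 (fun t ht => ne_of_gt ht)
  have hev : ∀ᶠ t in nhdsWithin (0:ℝ) (Set.Ioi 0),
      slope (fun t : ℝ => w (x + t • e)) 0 t < 0 :=
    (hslope.mono_left hmono).eventually_lt_const hneg
  filter_upwards [hev, self_mem_nhdsWithin] with t h1 h2
  have ht : (0:ℝ) < t := h2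
  rw [slope_def_field, sub_zero] at h1
  simp only [zero_smul, add_zero] at h1
  rcases lt_or_ge (w (x + t • e)) (w x) with h | h
  · exact h
  · exact absurd h1 (not_lt.mpr (div_nonneg (by linarith) ht.le))

lemma second_deriv_test {u : E N → ℝ} {x : E N} (hu : ContDiffAt ℝ 2 u x)
    (hmin : IsLocalMin u x) (i : Fin N) : 0 ≤ pd (pd u i) i x := by
  by_contra hcon
  push_neg at hcon
  set e : E N := EuclideanSpace.single i 1 with he
  have hne : ‖e‖ = 1 := by simp [he, EuclideanSpace.norm_single]
  have hF : DifferentiableAt ℝ (fderiv ℝ u) x :=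
    (hu.fderiv_right (m := 1) (by norm_num)).differentiableAt one_ne_zero
  set B : (E N →L[ℝ] ℝ) →L[ℝ] ℝ := ContinuousLinearMap.apply ℝ ℝ e with hB
  have hA : HasFDerivAt (fun z => fderiv ℝ u z e)
      (B.comp (fderiv ℝ (fderiv ℝ u) x)) x :=
    B.hasFDerivAt.comp x hF.hasFDerivAt
  have hfd : fderiv ℝ (pd u i) x = B.comp (fderiv ℝ (fderiv ℝ u) x) := hA.fderiv
  have hL : pd (pd u i) i x = (B.comp (fderiv ℝ (fderiv ℝ u) x)) e := by
    rw [pd, hfd]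
  -- ψ has derivative pd (pd u i) i x at 0 and ψ 0 = 0
  have hline : ∀ t : ℝ, HasDerivAt (fun t : ℝ => x + t • e) e t := fun t => by
    simpa using ((hasDerivAt_id t).smul_const e).const_add x
  have hψ : HasDerivAt (fun t : ℝ => fderiv ℝ u (x + t • e) e) (pd (pd u i) i x) 0 := by
    have hA' : HasFDerivAt (fun z => fderiv ℝ u z e)
        (B.comp (fderiv ℝ (fderiv ℝ u) x)) (x + (0:ℝ) • e) := by
      rw [zero_smul, add_zero]; exact hA
    have := hA'.comp_hasDerivAt 0 (hline 0)
    rw [hL]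
    exact this
  have hψ0 : fderiv ℝ u (x + (0:ℝ) • e) e = 0 := by
    simp [hmin.fderiv_eq_zero]
  -- ψ t < 0 for small positive t
  have hslope := hasDerivAt_iff_tendsto_slope.mp hψ
  have hmono : nhdsWithin (0:ℝ) (Set.Ioi 0) ≤ nhdsWithin (0:ℝ) {(0:ℝ)}ᶜ :=
    nhdsWithin_mono 0 (fun t ht => ne_of_gt ht)
  have hev : ∀ᶠ t in nhdsWithin (0:ℝ) (Set.Ioi 0),
      fderiv ℝ u (x + t • e) e < 0 := by
    filter_upwards [(hslope.mono_left hmono).eventually_lt_const hcon,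
      self_mem_nhdsWithin] with t h1 h2
    have ht : (0:ℝ) < t := h2
    rw [slope_def_field, sub_zero, hψ0, sub_zero] at h1
    rcases lt_or_ge (fderiv ℝ u (x + t • e) e) 0 with h | h
    · exact h
    · exact absurd h1 (not_lt.mpr (div_nonneg h ht.le))
  rw [eventually_nhdsWithin_iff, Metric.eventually_nhds_iff] at hev
  obtain ⟨δ₁, hδ₁, hball⟩ := hev
  have hud : ∀ᶠ z in nhds x, DifferentiableAt ℝ u z ∧ u x ≤ u z := by
    filter_upwards [(hu.eventually (by simp)).mono
      (fun z h => h.differentiableAt (by norm_num)), hmin] with z h1 h2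
    exact ⟨h1, h2⟩
  rw [Metric.eventually_nhds_iff] at hud
  obtain ⟨δ₂, hδ₂, hb2⟩ := hud
  set c : ℝ := min δ₁ δ₂ / 2 with hc
  have hc0 : 0 < c := by positivity
  have hdist : ∀ t : ℝ, t ∈ Set.Icc 0 c → dist (x + t • e) x < δ₂ := by
    intro t ht
    rw [dist_eq_norm, add_sub_cancel_left, norm_smul, hne, mul_one]
    have : |t| = t := abs_of_nonneg ht.1
    rw [Real.norm_eq_abs, this]
    calc t ≤ c := ht.2
      _ < δ₂ := by rw [hc]; have := min_le_right δ₁ δ₂; linarith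
  have hderiv : ∀ t : ℝ, t ∈ Set.Icc 0 c →
      HasDerivAt (fun t : ℝ => u (x + t • e)) (fderiv ℝ u (x + t • e) e) t := by
    intro t ht
    have hz := (hb2 (hdist t ht)).1
    exact hz.hasFDerivAt.comp_hasDerivAt t (hline t)
  have hcont : ContinuousOn (fun t : ℝ => u (x + t • e)) (Set.Icc 0 c) :=
    fun t ht => ((hderiv t ht).continuousAt).continuousWithinAt
  have hanti : StrictAntiOn (fun t : ℝ => u (x + t • e)) (Set.Icc 0 c) := by
    apply strictAntiOn_of_deriv_neg (convex_Icc 0 c) hcont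
    intro t ht
    rw [interior_Icc] at ht
    rw [(hderiv t ⟨ht.1.le, ht.2.le⟩).deriv]
    apply hball
    · rw [Real.dist_eq, sub_zero, abs_of_pos ht.1]
      calc t < c := ht.2
        _ < δ₁ := by rw [hc]; have := min_le_left δ₁ δ₂; linarith
    · exact ht.1
  have hlt : u (x + c • e) < u (x + (0:ℝ) • e) :=
    hanti (Set.left_mem_Icc.mpr hc0.le) (Set.right_mem_Icc.mpr hc0.le) hc0
  have hge : u x ≤ u (x + c • e) := (hb2 (hdist c (Set.right_mem_Icc.mpr hc0.le))).2
  simp only [zero_smul, add_zero] at hlt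
  linarith


/-- a boundary maximum principle on the upper half ball: if `-Δv ≥ 0` inside,
`∂v/∂y_N < 0` on the flat boundary part away from the origin, and `v > 0` away from the
origin, then `v` is bounded below by its minimum over the spherical boundary cap. -/
theorem stmt1 (N : ℕ) (hN : 3 ≤ N) (R : ℝ) (hR : 0 < R) (v : E N → ℝ)
    (hreg2 : ContDiffOn ℝ 2 v {y : E N | ‖y‖ < R ∧ 0 < y (lastIdx N (by omega))})
    (hreg1 : ContDiffOn ℝ 1 v
      ({y : E N | ‖y‖ ≤ R ∧ 0 ≤ y (lastIdx N (by omega))} \ {0}))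
    (hsuper : ∀ y : E N, ‖y‖ < R → 0 < y (lastIdx N (by omega)) → lap v y ≤ 0)
    (hbdry : ∀ y : E N, y ≠ 0 → ‖y‖ < R → y (lastIdx N (by omega)) = 0 →
      pd v (lastIdx N (by omega)) y < 0)
    (hpos : ∀ y : E N, y ≠ 0 → ‖y‖ ≤ R → 0 ≤ y (lastIdx N (by omega)) → 0 < v y) :
    ∀ y : E N, y ≠ 0 → ‖y‖ ≤ R → 0 ≤ y (lastIdx N (by omega)) →
      sInf (v '' {z : E N | ‖z‖ = R ∧ 0 ≤ z (lastIdx N (by omega))}) ≤ v y := by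
  intro y hy0 hyR hyN
  set n : Fin N := ⟨N-1, by omega⟩ with hn
  set p : ℝ := (2 - (N:ℝ))/2 with hp
  have hN3 : (3:ℝ) ≤ (N:ℝ) := by exact_mod_cast hN
  have hplt : p < 0 := by rw [hp]; linarith
  have hkey : (N:ℝ) + 2*p - 2 = 0 := by rw [hp]; ring
  set cap : Set (E N) := {z : E N | ‖z‖ = R ∧ 0 ≤ z n} with hcap
  set m : ℝ := sInf (v '' cap) with hm
  have hproj : Continuous (fun z : E N => z n) := (EuclideanSpace.proj (𝕜 := ℝ) n).continuous
  have hcapclosed : IsClosed cap :=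
    (isClosed_eq continuous_norm continuous_const).inter (isClosed_le continuous_const hproj)
  have hcapcompact : IsCompact cap := by
    apply Metric.isCompact_of_isClosed_isBounded hcapclosed
    apply (Metric.isBounded_closedBall (x := (0 : E N)) (r := R)).subset
    intro z hz
    simp [Metric.mem_closedBall, dist_zero_right, hz.1.le]
  have hcapsub : cap ⊆ {y : E N | ‖y‖ ≤ R ∧ 0 ≤ y n} \ {0} := by
    intro z hz
    refine ⟨⟨hz.1.le, hz.2⟩, ?_⟩
    intro h0
    rw [Set.mem_singleton_iff] at h0
    rw [h0] at hz
    have h1 := hz.1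
    rw [norm_zero] at h1
    exact absurd h1.symm (ne_of_gt hR)
  have hvcont : ContinuousOn v ({y : E N | ‖y‖ ≤ R ∧ 0 ≤ y n} \ {0}) := hreg1.continuousOn
  have hcapne : cap.Nonempty := by
    refine ⟨EuclideanSpace.single n R, ?_, ?_⟩
    · rw [EuclideanSpace.norm_single]; exact abs_of_pos hR
    · simp [EuclideanSpace.single_apply, hR.le]
  have hbdd : BddBelow (v '' cap) :=
    (hcapcompact.image_of_continuousOn (hvcont.mono hcapsub)).bddBelow
  have hm_le : ∀ z ∈ cap, m ≤ v z := fun z hz => csInf_le hbdd ⟨z, hz, rfl⟩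
  have hynorm : 0 < ‖y‖ := norm_pos_iff.mpr hy0
  -- main claim for each d > 0
  have main : ∀ d : ℝ, 0 < d → m ≤ v y + bar p d d R y := by
    intro d hd
    set w : E N → ℝ := fun z => v z + bar p d d R z with hw
    -- choose ε
    have htend : Tendsto (fun ε : ℝ => d * ((ε^2) ^ p - (R^2)^p)) (nhdsWithin 0 (Set.Ioi 0))
        atTop := by
      have h1 : Tendsto (fun ε : ℝ => (ε^2)⁻¹) (nhdsWithin 0 (Set.Ioi 0)) atTop := by
        apply tendsto_inv_nhdsGT_zero.comp
        rw [tendsto_nhdsWithin_iff]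
        constructor
        · have := ((continuous_pow 2).tendsto (0:ℝ)).mono_left
            (nhdsWithin_le_nhds (s := Set.Ioi (0:ℝ)))
          simpa using this
        · filter_upwards [self_mem_nhdsWithin] with t ht
          exact pow_pos (Set.mem_Ioi.mp ht) 2
      have h2 : Tendsto (fun ε : ℝ => ((ε^2)⁻¹) ^ (-p)) (nhdsWithin 0 (Set.Ioi 0)) atTop :=
        (tendsto_rpow_atTop (neg_pos.mpr hplt)).comp h1
      have h3 : Tendsto (fun ε : ℝ => (ε^2) ^ p) (nhdsWithin 0 (Set.Ioi 0)) atTop := by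
        apply h2.congr'
        filter_upwards [self_mem_nhdsWithin] with t ht
        have ht2 : (0:ℝ) < t^2 := pow_pos ht 2
        rw [Real.inv_rpow ht2.le, ← Real.rpow_neg ht2.le, neg_neg]
      have h4 : Tendsto (fun ε : ℝ => d * (ε^2) ^ p + (-(d * (R^2)^p)))
          (nhdsWithin 0 (Set.Ioi 0)) atTop :=
        tendsto_atTop_add_const_right _ _ (h3.const_mul_atTop hd)
      exact h4.congr (fun x => by ring)
    obtain ⟨ε, hεm, hεy, hε0⟩ : ∃ ε : ℝ, m ≤ d * ((ε^2) ^ p - (R^2)^p) ∧ ε ≤ ‖y‖ ∧ 0 < ε := by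
      have he1 := htend.eventually_ge_atTop m
      have he2 : ∀ᶠ ε : ℝ in nhdsWithin 0 (Set.Ioi 0), ε < ‖y‖ :=
        (tendsto_id.mono_right nhdsWithin_le_nhds).eventually_lt_const hynorm
      obtain ⟨ε, h1, h2, h3⟩ := (he1.and (he2.and self_mem_nhdsWithin)).exists
      exact ⟨ε, h1, h2.le, h3⟩
    have hεR : ε ≤ R := le_trans hεy hyR
    set K : Set (E N) := {z : E N | ε ≤ ‖z‖ ∧ ‖z‖ ≤ R ∧ 0 ≤ z n} with hK
    have hKclosed : IsClosed K :=
      ((isClosed_le continuous_const continuous_norm).inter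
        ((isClosed_le continuous_norm continuous_const).inter
          (isClosed_le continuous_const hproj)))
    have hKcompact : IsCompact K := by
      apply Metric.isCompact_of_isClosed_isBounded hKclosed
      apply (Metric.isBounded_closedBall (x := (0 : E N)) (r := R)).subset
      intro z hz
      simp [Metric.mem_closedBall, dist_zero_right, hz.2.1]
    have hyK : y ∈ K := ⟨hεy, hyR, hyN⟩
    have hKne : ∀ z : E N, z ∈ K → z ≠ 0 := by
      intro z hz h0
      rw [h0] at hz
      have h1 := hz.1
      rw [norm_zero] at h1
      linarith
    have hKsub : K ⊆ {y : E N | ‖y‖ ≤ R ∧ 0 ≤ y n} \ {0} := by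
      intro z hz
      exact ⟨⟨hz.2.1, hz.2.2⟩, fun h0 => hKne z hz h0⟩
    have hwcont : ContinuousOn w K := by
      apply ContinuousOn.add (hvcont.mono hKsub)
      intro z hz
      exact ((contDiffAt_bar (hKne z hz)).continuousAt).continuousWithinAt
    obtain ⟨x, hxK, hxmin⟩ := hKcompact.exists_isMinOn ⟨y, hyK⟩ hwcont
    have hx0 : x ≠ 0 := hKne x hxK
    have hxq : qf x = ‖x‖^2 := qf_eq_norm x
    have hdbar : DifferentiableAt ℝ (bar p d d R) x :=
      (contDiffAt_bar hx0).differentiableAt (by norm_num)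
    have hkeym : m ≤ w x := by
      rcases eq_or_lt_of_le hxK.2.1 with hxR | hxR
      · -- outer sphere
        have hbar0 : bar p d d R x = 0 := by
          rw [bar, hxq, hxR]; ring
        have := hm_le x ⟨hxR, hxK.2.2⟩
        show m ≤ v x + bar p d d R x
        rw [hbar0]; linarith
      rcases eq_or_lt_of_le hxK.1 with hxε | hxε
      · -- inner sphere
        have hbarval : bar p d d R x = d * ((ε^2)^p - (R^2)^p) + d * (R^2 - ε^2) := by
          rw [bar, hxq, ← hxε]
        have hvx : 0 < v x := hpos x hx0 hxK.2.1 hxK.2.2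
        have hRε : 0 ≤ R^2 - ε^2 := by nlinarith
        show m ≤ v x + bar p d d R x
        rw [hbarval]
        nlinarith
      rcases eq_or_lt_of_le hxK.2.2 with hxn | hxn
      · -- flat boundary part : contradiction with Hopf-type condition
        exfalso
        have hvd : DifferentiableAt ℝ v x := by
          by_contra hnd
          have hz := fderiv_zero_of_not_differentiableAt hnd
          have hb := hbdry x hx0 hxR hxn.symm
          rw [pd, hz] at hb
          simp at hb
        have hwd : DifferentiableAt ℝ w x := hvd.add hdbar
        have hpdw : pd w n x < 0 := by
          have hpa := pd_add hvd hdbar n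
          rw [hw]
          rw [hpa, pd_bar hx0 n, ← hxn]
          have hb := hbdry x hx0 hxR hxn.symm
          simp only [mul_zero, add_zero]
          exact hb
        have hev1 := eventually_lt_of_pd_neg hwd n hpdw
        set s : E N := EuclideanSpace.single n (1:ℝ) with hs
        have hcoord : ∀ t : ℝ, (x + t • s) n = x n + t := by
          intro t
          simp [hs, PiLp.add_apply, PiLp.smul_apply, EuclideanSpace.single_apply]
        have hnorm_t : Tendsto (fun t : ℝ => ‖x + t • s‖) (nhds 0) (nhds ‖x‖) := by
          have hc : Continuous (fun t : ℝ => ‖x + t • s‖) :=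
            (continuous_const.add ((continuous_id (X := ℝ)).smul continuous_const)).norm
          have h0 := hc.tendsto 0
          simpa using h0
        have hev2 : ∀ᶠ t in nhds (0:ℝ), ε ≤ ‖x + t • s‖ ∧ ‖x + t • s‖ ≤ R := by
          filter_upwards [hnorm_t.eventually_const_lt hxε, hnorm_t.eventually_lt_const hxR]
            with t h1 h2
          exact ⟨h1.le, h2.le⟩
        obtain ⟨t, hlt, hmem, ht0⟩ :=
          (hev1.and ((hev2.filter_mono nhdsWithin_le_nhds).and self_mem_nhdsWithin)).exists
        have htK : x + t • s ∈ K := by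
          refine ⟨hmem.1, hmem.2, ?_⟩
          rw [hcoord, ← hxn]
          simp
          exact le_of_lt ht0
        exact absurd (hxmin htK) (not_le.mpr hlt)
      · -- interior : contradiction with superharmonicity
        exfalso
        have hUopen : IsOpen {z : E N | ε < ‖z‖ ∧ ‖z‖ < R ∧ 0 < z n} :=
          (isOpen_lt continuous_const continuous_norm).inter
            ((isOpen_lt continuous_norm continuous_const).inter
              (isOpen_lt continuous_const hproj))
        have hKnhds : K ∈ nhds x :=
          Filter.mem_of_superset (hUopen.mem_nhds ⟨hxε, hxR, hxn⟩)
            (fun z hz => ⟨hz.1.le, hz.2.1.le, hz.2.2.le⟩)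
        have hloc : IsLocalMin w x := hxmin.isLocalMin hKnhds
        have hv2 : ContDiffAt ℝ 2 v x := by
          apply hreg2.contDiffAt
          exact ((isOpen_lt continuous_norm continuous_const).inter
            (isOpen_lt continuous_const hproj)).mem_nhds ⟨hxR, hxn⟩
        have hw2 : ContDiffAt ℝ 2 w x := hv2.add (contDiffAt_bar hx0)
        have hsum : (0:ℝ) ≤ lap w x :=
          Finset.sum_nonneg (fun i _ => second_deriv_test hw2 hloc i)
        have hlapw : lap w x = lap v x + lap (bar p d d R) x := by
          rw [hw]; exact lap_add_bar hx0 hv2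
        have hlapbar := lap_bar (p := p) (δ := d) (σ := d) (R := R) hx0
        have hzero : 2*p*d*((N:ℝ) + 2*p - 2) * qf x ^ (p-1) = 0 := by
          rw [hkey]; ring
        rw [hlapbar, hzero] at hlapw
        have hsup := hsuper x hxR hxn
        rw [hlapw] at hsum
        nlinarith
    calc m ≤ w x := hkeym
      _ ≤ w y := hxmin hyK
  -- pass to the limit d → 0⁺
  have hlim : Tendsto (fun d : ℝ => v y + bar p d d R y) (nhdsWithin 0 (Set.Ioi 0))
      (nhds (v y)) := by
    have hc : Continuous (fun d : ℝ => v y + bar p d d R y) := by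
      unfold bar
      exact continuous_const.add (((continuous_id (X := ℝ)).mul continuous_const).add
        ((continuous_id (X := ℝ)).mul continuous_const))
    have h0 := (hc.tendsto 0).mono_left (nhdsWithin_le_nhds (s := Set.Ioi (0:ℝ)))
    have hval : v y + bar p 0 0 R y = v y := by rw [bar]; ring
    rwa [hval] at h0
  exact ge_of_tendsto hlim (eventually_nhdsWithin_of_forall (fun d hd => main d hd))
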